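/- Let S be an invertible n×n, U an m×n, and V an n×m complex matrix, and suppose the n×n matrix K satisfies S⁻¹ K − K S = V U. For x ∈ ℤ and t ∈ ℝ set Ξ(x,t) = Sˣ · exp(−t (S − S⁻¹)), and assume that I + (Ξ(x,t) K)² is invertible for all (x,t) ∈ ℤ×ℝ. Then 𝒱 = −U (I + (Ξ K)²)⁻¹ Ξ V satisfies the m×m matrix semi-discrete modified KdV equation 𝒱̇ + 𝒱⁺ (I + 𝒱²) − (I + 𝒱²) 𝒱⁻ = 0, where 𝒱⁺(x,t) = 𝒱(x+1,t), 𝒱⁻(x,t) = 𝒱(x−1,t), and 𝒱̇ is the partial derivative with respect to t. -/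

import Mathlib

open Matrix

theorem mkdv_alg_key {n m : ℕ} (S C Λ W Wp Wm : Matrix (Fin n) (Fin n) ℂ)
    (Q : Matrix (Fin m) (Fin n) ℂ) (P : Matrix (Fin n) (Fin m) ℂ)
    (hSC : S * C = 1) (hCS : C * S = 1)
    (hWG : W * (1 + Λ * Λ) = 1) (hGW : (1 + Λ * Λ) * W = 1)
    (hWp : Wp * (1 + S * Λ * (S * Λ)) = 1)
    (hmW : (1 + C * Λ * (C * Λ)) * Wm = 1)
    (hPQ : P * Q = C * Λ - Λ * S) :
    Q * (W * (S - C) - W * ((S - C) * Λ * Λ + Λ * (S - C) * Λ) * W) * P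
      + -(Q * (Wp * S) * P) * (1 + -(Q * W * P) * -(Q * W * P))
      - (1 + -(Q * W * P) * -(Q * W * P)) * -(Q * (Wm * C) * P) = 0 := by
  obtain ⟨D, hD⟩ : ∃ D, D = C * Λ - Λ * S := ⟨_, rfl⟩
  have hPQ' : P * Q = D := by rw [hD]; exact hPQ
  have hΛW : Λ * W = W * Λ := by
    calc Λ * W = W * (1 + Λ * Λ) * (Λ * W) := by rw [hWG, one_mul]
      _ = W * (Λ * ((1 + Λ * Λ) * W)) := by noncomm_ring
      _ = W * Λ := by rw [hGW, mul_one]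
  -- claim 1
  have i1 : (1 + S * Λ * (S * Λ)) * S = S * (1 + Λ * Λ) - S * Λ * S * D := by
    rw [hD]
    have e : S * Λ * S * (C * Λ - Λ * S) = S * Λ * (S * C) * Λ - S * Λ * S * (Λ * S) := by
      noncomm_ring
    rw [e, hSC]; noncomm_ring
  have i2 : (1 + S * Λ * (S * Λ)) * Λ = S * D + S * Λ * S * (1 + Λ * Λ) := by
    rw [hD]
    have e : S * (C * Λ - Λ * S) = S * C * Λ - S * (Λ * S) := by noncomm_ring
    rw [e, hSC]; noncomm_ring
  have c1 : (1 + S * Λ * (S * Λ)) * (S * W + Λ * W * (D * W)) = S * (1 + D * W * (D * W)) := by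
    have e : (1 + S * Λ * (S * Λ)) * (S * W + Λ * W * (D * W))
        = ((1 + S * Λ * (S * Λ)) * S) * W + ((1 + S * Λ * (S * Λ)) * Λ) * (W * (D * W)) := by
      noncomm_ring
    rw [e, i1, i2]
    have e2 : (S * (1 + Λ * Λ) - S * Λ * S * D) * W
          + (S * D + S * Λ * S * (1 + Λ * Λ)) * (W * (D * W))
        = S * ((1 + Λ * Λ) * W) - S * Λ * S * (D * W) + S * (D * (W * (D * W)))
          + S * Λ * S * (((1 + Λ * Λ) * W) * (D * W)) := by noncomm_ring
    rw [e2, hGW]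
    noncomm_ring
  have claim1 : Wp * S * (1 + D * W * (D * W)) = S * W + Λ * W * (D * W) := by
    calc Wp * S * (1 + D * W * (D * W))
        = Wp * ((1 + S * Λ * (S * Λ)) * (S * W + Λ * W * (D * W))) := by
          rw [c1]; noncomm_ring
      _ = Wp * (1 + S * Λ * (S * Λ)) * (S * W + Λ * W * (D * W)) := (mul_assoc Wp _ _).symm
      _ = S * W + Λ * W * (D * W) := by rw [hWp, one_mul]
  -- claim 2
  have j1 : D * (C * Λ) = C * Λ * (C * Λ) - Λ * Λ := by
    rw [hD]
    have e : (C * Λ - Λ * S) * (C * Λ) = C * Λ * (C * Λ) - Λ * ((S * C) * Λ) := by noncomm_ring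
    rw [e, hSC]; noncomm_ring
  have j2 : Λ * (S * (1 + C * Λ * (C * Λ))) = (1 + Λ * Λ) * (C * Λ) - D := by
    rw [hD]
    have e : Λ * (S * (1 + C * Λ * (C * Λ))) = Λ * S + Λ * ((S * C) * (Λ * (C * Λ))) := by
      noncomm_ring
    rw [e, hSC]; noncomm_ring
  have c2 : (W * C - W * D * (W * Λ)) * (S * (1 + C * Λ * (C * Λ))) = 1 + W * D * (W * D) := by
    have e : (W * C - W * D * (W * Λ)) * (S * (1 + C * Λ * (C * Λ)))
        = W * ((C * S) * (1 + C * Λ * (C * Λ)))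
          - W * D * W * (Λ * (S * (1 + C * Λ * (C * Λ)))) := by noncomm_ring
    rw [e, hCS, j2]
    have e2 : W * (1 * (1 + C * Λ * (C * Λ))) - W * D * W * ((1 + Λ * Λ) * (C * Λ) - D)
        = W * (1 + C * Λ * (C * Λ)) - W * (D * ((W * (1 + Λ * Λ)) * (C * Λ)))
          + W * D * (W * D) := by noncomm_ring
    rw [e2, hWG]
    have e3 : W * (1 + C * Λ * (C * Λ)) - W * (D * (1 * (C * Λ))) + W * D * (W * D)
        = W * ((1 + C * Λ * (C * Λ)) - D * (C * Λ)) + W * D * (W * D) := by noncomm_ring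
    rw [e3, j1]
    have e4 : W * ((1 + C * Λ * (C * Λ)) - (C * Λ * (C * Λ) - Λ * Λ)) + W * D * (W * D)
        = W * (1 + Λ * Λ) + W * D * (W * D) := by noncomm_ring
    rw [e4, hWG]
  have claim2 : (1 + W * D * (W * D)) * (Wm * C) = W * C - W * D * (W * Λ) := by
    calc (1 + W * D * (W * D)) * (Wm * C)
        = ((W * C - W * D * (W * Λ)) * (S * (1 + C * Λ * (C * Λ)))) * (Wm * C) := by rw [c2]
      _ = (W * C - W * D * (W * Λ)) * (S * (((1 + C * Λ * (C * Λ)) * Wm) * C)) := by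
          noncomm_ring
      _ = (W * C - W * D * (W * Λ)) * (S * (1 * C)) := by rw [hmW]
      _ = (W * C - W * D * (W * Λ)) * (S * C) := by rw [one_mul]
      _ = W * C - W * D * (W * Λ) := by rw [hSC, mul_one]
  -- reduce the two nonlinear terms
  have h2 : -(Q * (Wp * S) * P) * (1 + -(Q * W * P) * -(Q * W * P))
      = -(Q * (Wp * S * (1 + (P * Q) * W * ((P * Q) * W))) * P) := by
    simp only [sub_eq_add_neg, Matrix.mul_add, Matrix.add_mul, Matrix.mul_neg, Matrix.neg_mul,
        Matrix.mul_assoc, Matrix.mul_one, Matrix.one_mul, neg_neg]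
    try abel
  have h3 : (1 + -(Q * W * P) * -(Q * W * P)) * -(Q * (Wm * C) * P)
      = -(Q * ((1 + W * (P * Q) * (W * (P * Q))) * (Wm * C)) * P) := by
    simp only [sub_eq_add_neg, Matrix.mul_add, Matrix.add_mul, Matrix.mul_neg, Matrix.neg_mul,
        Matrix.mul_assoc, Matrix.mul_one, Matrix.one_mul, neg_neg]
    try abel
  rw [h2, h3, hPQ', claim1, claim2]
  -- final bracket
  have hone1 : W + Λ * Λ * W = 1 := by
    calc W + Λ * Λ * W = (1 + Λ * Λ) * W := by noncomm_ring
      _ = 1 := hGW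
  have hone2 : W + W * (Λ * Λ) = 1 := by
    calc W + W * (Λ * Λ) = W * (1 + Λ * Λ) := by noncomm_ring
      _ = 1 := hWG
  have s1 : Λ * W * (D * W) = W * (Λ * D) * W := by rw [hΛW]; noncomm_ring
  have s2 : W * D * (W * Λ) = W * (D * Λ) * W := by
    have e : W * D * (W * Λ) = W * D * (Λ * W) := by rw [hΛW]
    rw [e]; noncomm_ring
  have hBR : W * (S - C) - W * ((S - C) * Λ * Λ + Λ * (S - C) * Λ) * W
      - (S * W + Λ * W * (D * W)) + (W * C - W * D * (W * Λ)) = 0 := by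
    calc W * (S - C) - W * ((S - C) * Λ * Λ + Λ * (S - C) * Λ) * W
          - (S * W + Λ * W * (D * W)) + (W * C - W * D * (W * Λ))
        = W * ((S - C) * (W + Λ * Λ * W)) - W * ((S - C) * Λ * Λ + Λ * (S - C) * Λ) * W
          - ((W + W * (Λ * Λ)) * (S * W) + W * (Λ * D) * W)
          + (W * (C * (W + Λ * Λ * W)) - W * (D * Λ) * W) := by
          rw [hone1, hone2, s1, s2]; noncomm_ring
      _ = 0 := by rw [hD]; noncomm_ring
  calc Q * (W * (S - C) - W * ((S - C) * Λ * Λ + Λ * (S - C) * Λ) * W) * P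
        + -(Q * (S * W + Λ * W * (D * W)) * P) - -(Q * (W * C - W * D * (W * Λ)) * P)
      = Q * (W * (S - C) - W * ((S - C) * Λ * Λ + Λ * (S - C) * Λ) * W
          - (S * W + Λ * W * (D * W)) + (W * C - W * D * (W * Λ))) * P := by
        simp only [sub_eq_add_neg, Matrix.mul_add, Matrix.add_mul, Matrix.mul_neg, Matrix.neg_mul,
        Matrix.mul_assoc, Matrix.mul_one, Matrix.one_mul, neg_neg]
        try abel
    _ = Q * (0 : Matrix (Fin n) (Fin n) ℂ) * P := by rw [hBR]
    _ = 0 := by rw [Matrix.mul_zero, Matrix.zero_mul]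


set_option maxHeartbeats 1000000

section LinftyWorld

attribute [local instance] Matrix.linftyOpNormedAddCommGroup Matrix.linftyOpNormedSpace
  Matrix.linftyOpNormedRing Matrix.linftyOpNormedAlgebra

theorem mkdv_entry_hasDerivAt {N M : ℕ} {f : ℝ → Matrix (Fin N) (Fin M) ℂ}
    {d : Matrix (Fin N) (Fin M) ℂ} {t : ℝ}
    (hf : HasDerivAt f d t) (i : Fin N) (j : Fin M) :
    HasDerivAt (fun s => f s i j) (d i j) t := by
  have hc : Continuous fun A : Matrix (Fin N) (Fin M) ℂ => A i j := by
    exact (continuous_apply j).comp (continuous_apply i)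
  rw [hasDerivAt_iff_tendsto_slope]
  replace hf := hasDerivAt_iff_tendsto_slope.mp hf
  have h2 := (hc.tendsto d).comp hf
  refine h2.congr fun s => ?_
  simp [slope, Function.comp, Matrix.smul_apply, Matrix.sub_apply]

theorem mkdv_V_hasDerivAt {n m : ℕ}
    (S : Matrix (Fin n) (Fin n) ℂ) (hS : IsUnit S)
    (U : Matrix (Fin m) (Fin n) ℂ) (V : Matrix (Fin n) (Fin m) ℂ)
    (K : Matrix (Fin n) (Fin n) ℂ)
    (Ξ : ℤ → ℝ → Matrix (Fin n) (Fin n) ℂ)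
    (hΞ : ∀ (x : ℤ) (t : ℝ),
      Ξ x t = S ^ x * NormedSpace.exp ((-(t : ℂ)) • (S - S⁻¹)))
    (hinv : ∀ (x : ℤ) (t : ℝ), IsUnit (1 + (Ξ x t * K) ^ 2))
    (x : ℤ) (t : ℝ) :
    HasDerivAt (fun s : ℝ => -(U * (1 + (Ξ x s * K) ^ 2)⁻¹ * Ξ x s * V))
      (U * ((1 + (Ξ x t * K) ^ 2)⁻¹ * (S - S⁻¹)
          - (1 + (Ξ x t * K) ^ 2)⁻¹
            * ((S - S⁻¹) * (Ξ x t * K) * (Ξ x t * K)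
                + (Ξ x t * K) * (S - S⁻¹) * (Ξ x t * K))
            * (1 + (Ξ x t * K) ^ 2)⁻¹)
        * (Ξ x t * V)) t := by
  have hSd : IsUnit S.det := (Matrix.isUnit_iff_isUnit_det S).mp hS
  -- commutation of S and S⁻¹ with zpow
  have hCx : (S - S⁻¹) * S ^ x = S ^ x * (S - S⁻¹) := by
    have h1 : S * S ^ x = S ^ x * S := by
      calc S * S ^ x = S ^ (1 : ℤ) * S ^ x := by rw [zpow_one]
        _ = S ^ (1 + x) := (Matrix.zpow_add hSd 1 x).symm
        _ = S ^ (x + 1) := by rw [add_comm]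
        _ = S ^ x * S ^ (1 : ℤ) := Matrix.zpow_add hSd x 1
        _ = S ^ x * S := by rw [zpow_one]
    have h2 : S⁻¹ * S ^ x = S ^ x * S⁻¹ := by
      calc S⁻¹ * S ^ x = S ^ (-1 : ℤ) * S ^ x := by rw [Matrix.zpow_neg_one]
        _ = S ^ (-1 + x) := (Matrix.zpow_add hSd (-1) x).symm
        _ = S ^ (x + -1) := by rw [add_comm]
        _ = S ^ x * S ^ (-1 : ℤ) := Matrix.zpow_add hSd x (-1)
        _ = S ^ x * S⁻¹ := by rw [Matrix.zpow_neg_one]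
    rw [sub_mul, mul_sub, h1, h2]
  obtain ⟨B, hBdef⟩ : ∃ B, B = -(S - S⁻¹) := ⟨_, rfl⟩
  have harg : ∀ s : ℝ, (-(s : ℂ)) • (S - S⁻¹) = s • B := by
    intro s
    rw [hBdef]
    ext i j
    simp only [Matrix.smul_apply, Matrix.neg_apply, Matrix.sub_apply, Complex.real_smul,
      smul_eq_mul, neg_mul]
    ring
  have hfun : (fun s : ℝ => Ξ x s) = fun s : ℝ => S ^ x * NormedSpace.exp (s • B) := by
    funext s
    rw [hΞ x s, harg s]
  have hXit : Ξ x t = S ^ x * NormedSpace.exp (t • B) := congrFun hfun t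
  -- commutation of (S - S⁻¹) with Ξ x t
  have hcomm : (S - S⁻¹) * Ξ x t = Ξ x t * (S - S⁻¹) := by
    have hc2 : Commute (S - S⁻¹) (NormedSpace.exp (t • B)) := by
      have h0 : Commute (S - S⁻¹) (t • B) := by
        rw [hBdef]
        exact ((Commute.refl (S - S⁻¹)).neg_right).smul_right t
      exact h0.exp_right
    rw [hXit, ← Matrix.mul_assoc, hCx, Matrix.mul_assoc, hc2.eq, Matrix.mul_assoc]
  -- derivative of the exponential
  have hB : HasDerivAt (fun s : ℝ => NormedSpace.exp (s • B))
      (B * NormedSpace.exp (t • B)) t := by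
    have h := hasDerivAt_exp_smul_const' (𝕂 := ℝ) B t
    exact h
  -- derivative of Ξ
  have hXi : HasDerivAt (fun s : ℝ => Ξ x s) (-((S - S⁻¹) * Ξ x t)) t := by
    rw [hfun]
    have h1 := hB.const_mul (S ^ x)
    refine h1.congr_deriv (Eq.symm ?_)
    rw [hXit, hBdef, ← Matrix.mul_assoc, hCx, Matrix.mul_assoc, Matrix.neg_mul, Matrix.mul_neg]
  -- derivative of L = Ξ K
  have hL : HasDerivAt (fun s : ℝ => Ξ x s * K) (-((S - S⁻¹) * Ξ x t) * K) t := hXi.mul_const K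
  -- derivative of G
  have hG : HasDerivAt (fun s : ℝ => 1 + (Ξ x s * K) ^ 2)
      (-((S - S⁻¹) * Ξ x t) * K * (Ξ x t * K) + Ξ x t * K * (-((S - S⁻¹) * Ξ x t) * K)) t := by
    have hsq : (fun s : ℝ => 1 + (Ξ x s * K) ^ 2)
        = fun s : ℝ => 1 + (Ξ x s * K) * (Ξ x s * K) := by
      funext s; rw [pow_two]
    rw [hsq]
    exact (hL.mul hL).const_add 1
  -- derivative of W = G⁻¹
  have hu : IsUnit (1 + (Ξ x t * K) ^ 2) := hinv x t
  have hcu : ((hu.unit⁻¹ : (Matrix (Fin n) (Fin n) ℂ)ˣ) : Matrix (Fin n) (Fin n) ℂ)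
      = (1 + (Ξ x t * K) ^ 2)⁻¹ := by
    calc ((hu.unit⁻¹ : (Matrix (Fin n) (Fin n) ℂ)ˣ) : Matrix (Fin n) (Fin n) ℂ)
        = Ring.inverse ((hu.unit : (Matrix (Fin n) (Fin n) ℂ)ˣ) : Matrix (Fin n) (Fin n) ℂ) :=
          (Ring.inverse_unit hu.unit).symm
      _ = Ring.inverse (1 + (Ξ x t * K) ^ 2) := by rw [hu.unit_spec]
      _ = (1 + (Ξ x t * K) ^ 2)⁻¹ := (Matrix.nonsing_inv_eq_ringInverse _).symm
  have hW : HasDerivAt (fun s : ℝ => (1 + (Ξ x s * K) ^ 2)⁻¹)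
      (-((1 + (Ξ x t * K) ^ 2)⁻¹
          * (-((S - S⁻¹) * Ξ x t) * K * (Ξ x t * K) + Ξ x t * K * (-((S - S⁻¹) * Ξ x t) * K))
          * (1 + (Ξ x t * K) ^ 2)⁻¹)) t := by
    have hinvfun : (fun s : ℝ => (1 + (Ξ x s * K) ^ 2)⁻¹)
        = fun s : ℝ => Ring.inverse (1 + (Ξ x s * K) ^ 2) := by
      funext s; exact Matrix.nonsing_inv_eq_ringInverse _
    rw [hinvfun]
    have hfd := hasFDerivAt_ringInverse (𝕜 := ℝ) hu.unit
    rw [IsUnit.unit_spec] at hfd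
    have hcomp := hfd.comp_hasDerivAt t hG
    refine hcomp.congr_deriv (Eq.symm ?_)
    simp only [ContinuousLinearMap.neg_apply, ContinuousLinearMap.mulLeftRight_apply, hcu]
  -- derivative of W * Ξ
  have hWXi := hW.mul hXi
  -- final continuous linear map
  let φl : Matrix (Fin n) (Fin n) ℂ →ₗ[ℂ] Matrix (Fin m) (Fin m) ℂ :=
    { toFun := fun X => -(U * X * V)
      map_add' := fun X Y => by simp [Matrix.mul_add, Matrix.add_mul]; abel
      map_smul' := fun c X => by
        simp [Matrix.mul_smul, Matrix.smul_mul] }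
  have hφc : Continuous φl := φl.continuous_of_finiteDimensional
  let φ : Matrix (Fin n) (Fin n) ℂ →L[ℂ] Matrix (Fin m) (Fin m) ℂ := ⟨φl, hφc⟩
  have hfinal := ((φ.restrictScalars ℝ).hasFDerivAt).comp_hasDerivAt t hWXi
  have hfun2 : (fun s : ℝ => -(U * (1 + (Ξ x s * K) ^ 2)⁻¹ * Ξ x s * V))
      = fun s : ℝ => (φ.restrictScalars ℝ) ((1 + (Ξ x s * K) ^ 2)⁻¹ * Ξ x s) := by
    funext s
    show _ = -(U * ((1 + (Ξ x s * K) ^ 2)⁻¹ * Ξ x s) * V)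
    rw [Matrix.mul_assoc U]
  rw [hfun2]
  refine hfinal.congr_deriv (Eq.symm ?_)
  show _ = -(U * _ * V)
  simp only [sub_eq_add_neg, Matrix.mul_add, Matrix.add_mul, Matrix.mul_neg, Matrix.neg_mul,
    Matrix.mul_assoc, Matrix.mul_one, Matrix.one_mul, neg_neg, neg_add]
  try abel

theorem mkdv_inv_comm {n : ℕ}
    (S : Matrix (Fin n) (Fin n) ℂ) (hS : IsUnit S)
    (Ξ : ℤ → ℝ → Matrix (Fin n) (Fin n) ℂ)
    (hΞ : ∀ (x : ℤ) (t : ℝ),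
      Ξ x t = S ^ x * NormedSpace.exp ((-(t : ℂ)) • (S - S⁻¹)))
    (x : ℤ) (t : ℝ) : S⁻¹ * Ξ x t = Ξ x t * S⁻¹ := by
  have hSd : IsUnit S.det := (Matrix.isUnit_iff_isUnit_det S).mp hS
  have hSS : S * S⁻¹ = 1 := Matrix.mul_nonsing_inv S hSd
  have hSiS : S⁻¹ * S = 1 := Matrix.nonsing_inv_mul S hSd
  have hc1 : S⁻¹ * S ^ x = S ^ x * S⁻¹ := by
    calc S⁻¹ * S ^ x = S ^ (-1 : ℤ) * S ^ x := by rw [Matrix.zpow_neg_one]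
      _ = S ^ (-1 + x) := (Matrix.zpow_add hSd (-1) x).symm
      _ = S ^ (x + -1) := by rw [add_comm]
      _ = S ^ x * S ^ (-1 : ℤ) := Matrix.zpow_add hSd x (-1)
      _ = S ^ x * S⁻¹ := by rw [Matrix.zpow_neg_one]
  have hc2 : Commute S⁻¹ (NormedSpace.exp ((-(t : ℂ)) • (S - S⁻¹))) := by
    have h0 : Commute S⁻¹ ((-(t : ℂ)) • (S - S⁻¹)) := by
      have hcS : Commute S⁻¹ S := by
        unfold Commute SemiconjBy
        rw [hSS, hSiS]
      exact (hcS.sub_right (Commute.refl S⁻¹)).smul_right _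
    exact h0.exp_right
  rw [hΞ x t, ← Matrix.mul_assoc, hc1, Matrix.mul_assoc, hc2.eq, Matrix.mul_assoc]

end LinftyWorld


attribute [local instance] Matrix.normedAddCommGroup Matrix.normedSpace

/-- Partial derivative with respect to the continuous (time) variable of a function
of a discrete variable `x : ℤ` and `t : ℝ`. -/
noncomputable def pdt' {α : Type*} [NormedAddCommGroup α] [NormedSpace ℝ α]
    (f : ℤ → ℝ → α) : ℤ → ℝ → α :=
  fun x t => deriv (fun s => f x s) t

theorem mkdv_assemble {N M : ℕ} {f : ℝ → Matrix (Fin N) (Fin M) ℂ}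
    {d : Matrix (Fin N) (Fin M) ℂ} {t : ℝ}
    (h : ∀ (i : Fin N) (j : Fin M), HasDerivAt (fun s => f s i j) (d i j) t) :
    HasDerivAt f d t := by
  refine hasDerivAt_iff_tendsto_slope.mpr ?_
  have key : ∀ (i : Fin N) (j : Fin M),
      Filter.Tendsto (fun s => slope f t s i j) (nhdsWithin t {t}ᶜ) (nhds (d i j)) := by
    intro i j
    have h2 := h i j
    rw [hasDerivAt_iff_tendsto_slope] at h2
    refine h2.congr fun s => ?_
    simp [slope, Matrix.smul_apply, Matrix.sub_apply]
  exact tendsto_pi_nhds.2 fun i => tendsto_pi_nhds.2 fun j => key i j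

/-- Solutions of the matrix semi-discrete modified KdV equation from a
Sylvester equation. -/
theorem matrix_semidiscrete_mKdV_solutions
    {n m : ℕ}
    (S : Matrix (Fin n) (Fin n) ℂ) (hS : IsUnit S)
    (U : Matrix (Fin m) (Fin n) ℂ) (V : Matrix (Fin n) (Fin m) ℂ)
    (K : Matrix (Fin n) (Fin n) ℂ)
    (hSyl : S⁻¹ * K - K * S = V * U)
    (Ξ : ℤ → ℝ → Matrix (Fin n) (Fin n) ℂ)
    (hΞ : ∀ (x : ℤ) (t : ℝ),
      Ξ x t = S ^ x * NormedSpace.exp ((-(t : ℂ)) • (S - S⁻¹)))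
    (hinv : ∀ (x : ℤ) (t : ℝ), IsUnit (1 + (Ξ x t * K) ^ 2))
    (𝒱 : ℤ → ℝ → Matrix (Fin m) (Fin m) ℂ)
    (h𝒱 : ∀ (x : ℤ) (t : ℝ),
      𝒱 x t = -(U * (1 + (Ξ x t * K) ^ 2)⁻¹ * Ξ x t * V)) :
    ∀ (x : ℤ) (t : ℝ),
      pdt' 𝒱 x t + 𝒱 (x + 1) t * (1 + 𝒱 x t * 𝒱 x t)
        - (1 + 𝒱 x t * 𝒱 x t) * 𝒱 (x - 1) t = 0 := by
  intro x t
  have hSd : IsUnit S.det := (Matrix.isUnit_iff_isUnit_det S).mp hS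
  have hSS : S * S⁻¹ = 1 := Matrix.mul_nonsing_inv S hSd
  have hSiS : S⁻¹ * S = 1 := Matrix.nonsing_inv_mul S hSd
  -- shift identities
  have hXp : Ξ (x + 1) t = S * Ξ x t := by
    rw [hΞ (x + 1) t, hΞ x t, ← Matrix.mul_assoc]
    congr 1
    calc S ^ (x + 1) = S ^ (1 + x) := by rw [add_comm]
      _ = S ^ (1 : ℤ) * S ^ x := Matrix.zpow_add hSd 1 x
      _ = S * S ^ x := by rw [zpow_one]
  have hXm : Ξ (x - 1) t = S⁻¹ * Ξ x t := by
    rw [hΞ (x - 1) t, hΞ x t, ← Matrix.mul_assoc]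
    congr 1
    calc S ^ (x - 1) = S ^ (-1 + x) := by rw [sub_eq_add_neg, add_comm]
      _ = S ^ (-1 : ℤ) * S ^ x := Matrix.zpow_add hSd (-1) x
      _ = S⁻¹ * S ^ x := by rw [Matrix.zpow_neg_one]
  -- the Sylvester-type relation
  have hcommInv : S⁻¹ * Ξ x t = Ξ x t * S⁻¹ := mkdv_inv_comm S hS Ξ hΞ x t
  have hPQ : (Ξ x t * V) * U = S⁻¹ * (Ξ x t * K) - (Ξ x t * K) * S := by
    calc (Ξ x t * V) * U = Ξ x t * (V * U) := Matrix.mul_assoc _ _ _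
      _ = Ξ x t * (S⁻¹ * K - K * S) := by rw [hSyl]
      _ = Ξ x t * (S⁻¹ * K) - Ξ x t * (K * S) := by rw [Matrix.mul_sub]
      _ = (Ξ x t * S⁻¹) * K - (Ξ x t * K) * S := by
          rw [Matrix.mul_assoc (Ξ x t) S⁻¹ K, Matrix.mul_assoc (Ξ x t) K S]
      _ = (S⁻¹ * Ξ x t) * K - (Ξ x t * K) * S := by rw [hcommInv]
      _ = S⁻¹ * (Ξ x t * K) - (Ξ x t * K) * S := by rw [Matrix.mul_assoc]
  -- the inverses
  have hu : IsUnit (1 + (Ξ x t * K) ^ 2) := hinv x t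
  have hWG : (1 + (Ξ x t * K) ^ 2)⁻¹ * (1 + (Ξ x t * K) * (Ξ x t * K)) = 1 := by
    rw [← pow_two (Ξ x t * K)]
    exact Matrix.nonsing_inv_mul _ ((Matrix.isUnit_iff_isUnit_det _).mp hu)
  have hGW : (1 + (Ξ x t * K) * (Ξ x t * K)) * (1 + (Ξ x t * K) ^ 2)⁻¹ = 1 := by
    rw [← pow_two (Ξ x t * K)]
    exact Matrix.mul_nonsing_inv _ ((Matrix.isUnit_iff_isUnit_det _).mp hu)
  have hup : IsUnit (1 + (S * (Ξ x t * K)) ^ 2) := by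
    have h0 := hinv (x + 1) t
    rwa [hXp, Matrix.mul_assoc S (Ξ x t) K] at h0
  have hWp : (1 + (S * (Ξ x t * K)) ^ 2)⁻¹ * (1 + S * (Ξ x t * K) * (S * (Ξ x t * K))) = 1 := by
    rw [← pow_two (S * (Ξ x t * K))]
    exact Matrix.nonsing_inv_mul _ ((Matrix.isUnit_iff_isUnit_det _).mp hup)
  have hum : IsUnit (1 + (S⁻¹ * (Ξ x t * K)) ^ 2) := by
    have h0 := hinv (x - 1) t
    rwa [hXm, Matrix.mul_assoc S⁻¹ (Ξ x t) K] at h0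
  have hmW : (1 + S⁻¹ * (Ξ x t * K) * (S⁻¹ * (Ξ x t * K))) * (1 + (S⁻¹ * (Ξ x t * K)) ^ 2)⁻¹
      = 1 := by
    rw [← pow_two (S⁻¹ * (Ξ x t * K))]
    exact Matrix.mul_nonsing_inv _ ((Matrix.isUnit_iff_isUnit_det _).mp hum)
  -- the derivative
  have hder : HasDerivAt (fun s => 𝒱 x s)
      (U * ((1 + (Ξ x t * K) ^ 2)⁻¹ * (S - S⁻¹)
          - (1 + (Ξ x t * K) ^ 2)⁻¹
            * ((S - S⁻¹) * (Ξ x t * K) * (Ξ x t * K)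
                + (Ξ x t * K) * (S - S⁻¹) * (Ξ x t * K))
            * (1 + (Ξ x t * K) ^ 2)⁻¹)
        * (Ξ x t * V)) t := by
    have hfun : (fun s => 𝒱 x s) = fun s => -(U * (1 + (Ξ x s * K) ^ 2)⁻¹ * Ξ x s * V) :=
      funext fun s => h𝒱 x s
    rw [hfun]
    exact mkdv_assemble fun i j =>
      mkdv_entry_hasDerivAt (mkdv_V_hasDerivAt S hS U V K Ξ hΞ hinv x t) i j
  have hpdt : pdt' 𝒱 x t
      = U * ((1 + (Ξ x t * K) ^ 2)⁻¹ * (S - S⁻¹)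
          - (1 + (Ξ x t * K) ^ 2)⁻¹
            * ((S - S⁻¹) * (Ξ x t * K) * (Ξ x t * K)
                + (Ξ x t * K) * (S - S⁻¹) * (Ξ x t * K))
            * (1 + (Ξ x t * K) ^ 2)⁻¹)
        * (Ξ x t * V) := hder.deriv
  -- rewrite the three values of 𝒱
  have hVx : 𝒱 x t = -(U * (1 + (Ξ x t * K) ^ 2)⁻¹ * (Ξ x t * V)) := by
    rw [h𝒱 x t, Matrix.mul_assoc (U * (1 + (Ξ x t * K) ^ 2)⁻¹) (Ξ x t) V]
  have hVp : 𝒱 (x + 1) t = -(U * ((1 + (S * (Ξ x t * K)) ^ 2)⁻¹ * S) * (Ξ x t * V)) := by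
    rw [h𝒱 (x + 1) t, hXp, Matrix.mul_assoc S (Ξ x t) K]
    simp only [Matrix.mul_assoc]
  have hVm : 𝒱 (x - 1) t = -(U * ((1 + (S⁻¹ * (Ξ x t * K)) ^ 2)⁻¹ * S⁻¹) * (Ξ x t * V)) := by
    rw [h𝒱 (x - 1) t, hXm, Matrix.mul_assoc S⁻¹ (Ξ x t) K]
    simp only [Matrix.mul_assoc]
  rw [hpdt, hVx, hVp, hVm]
  exact mkdv_alg_key S S⁻¹ (Ξ x t * K) (1 + (Ξ x t * K) ^ 2)⁻¹
    (1 + (S * (Ξ x t * K)) ^ 2)⁻¹ (1 + (S⁻¹ * (Ξ x t * K)) ^ 2)⁻¹ U (Ξ x t * V)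
    hSS hSiS hWG hGW hWp hmW hPQ
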